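/- Lemma (canonical pre-images; Lemma F-Phi, assertions (1), (2) and (5)): in the expansion setup, for every f ∈ R[y] there exists a unique F ∈ R[y₁, …, y_k] such that π(F) = f and, for every 1 ≤ j ≤ k−1, the degree of F in the variable y_j is strictly less than p_j. -/

import Mathlib

open Finset in
lemma mr_bound (q a : ℕ → ℕ) (m : ℕ) (h : ∀ i < m, a i < q i) :
    (∑ i ∈ range m, a i * ∏ t ∈ range i, q t) < ∏ t ∈ range m, q t := by
  induction m with
  | zero => simp
  | succ m ih =>
    rw [Finset.sum_range_succ, Finset.prod_range_succ]
    calc (∑ i ∈ range m, a i * ∏ t ∈ range i, q t) + a m * ∏ t ∈ range m, q t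
        < (1 + a m) * ∏ t ∈ range m, q t := by
          rw [add_mul, one_mul]
          exact Nat.add_lt_add_right (ih fun i hi => h i (hi.trans (Nat.lt_succ_self m))) _
      _ ≤ (∏ t ∈ range m, q t) * q m := by
          rw [mul_comm]
          exact Nat.mul_le_mul le_rfl (by have := h m (Nat.lt_succ_self m); omega)

open Finset in
lemma mr_inj (q : ℕ → ℕ) : ∀ (k : ℕ) (a b : ℕ → ℕ),
    (∀ i, i + 1 < k → a i < q i) → (∀ i, i + 1 < k → b i < q i) →
    (∑ i ∈ range k, a i * ∏ t ∈ range i, q t)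
      = (∑ i ∈ range k, b i * ∏ t ∈ range i, q t) →
    ∀ i < k, a i = b i := by
  intro k
  induction k with
  | zero => intro a b _ _ _ i hi; omega
  | succ k ih =>
    intro a b ha hb hsum i hi
    have ha' : ∀ i < k, a i < q i := fun i hi => ha i (by omega)
    have hb' : ∀ i < k, b i < q i := fun i hi => hb i (by omega)
    have hWpos : 0 < ∏ t ∈ range k, q t :=
      Finset.prod_pos fun t ht => lt_of_le_of_lt (Nat.zero_le _) (ha' t (Finset.mem_range.mp ht))
    rw [Finset.sum_range_succ, Finset.sum_range_succ] at hsum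
    have hla := mr_bound q a k ha'
    have hlb := mr_bound q b k hb'
    have htop : a k = b k := by
      have h1 : ((∑ i ∈ range k, a i * ∏ t ∈ range i, q t) + a k * ∏ t ∈ range k, q t)
          / ∏ t ∈ range k, q t = a k := by
        rw [Nat.add_mul_div_right _ _ hWpos, Nat.div_eq_of_lt hla, Nat.zero_add]
      have h2 : ((∑ i ∈ range k, b i * ∏ t ∈ range i, q t) + b k * ∏ t ∈ range k, q t)
          / ∏ t ∈ range k, q t = b k := by
        rw [Nat.add_mul_div_right _ _ hWpos, Nat.div_eq_of_lt hlb, Nat.zero_add]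
      rw [← h1, ← h2, hsum]
    rcases Nat.lt_succ_iff_lt_or_eq.mp hi with hik | hik
    · have hlow : (∑ i ∈ range k, a i * ∏ t ∈ range i, q t)
          = ∑ i ∈ range k, b i * ∏ t ∈ range i, q t := by
        rw [htop] at hsum; omega
      exact ih a b (fun i hi => ha' i (by omega)) (fun i hi => hb' i (by omega)) hlow i hik
    · rw [hik]; exact htop

open Finset in
lemma mr_exists (q : ℕ → ℕ) : ∀ (m : ℕ) (n : ℕ), (∀ i < m, 0 < q i) →
    n < ∏ t ∈ range m, q t →
    ∃ a : ℕ → ℕ, (∀ i < m, a i < q i) ∧ (∑ i ∈ range m, a i * ∏ t ∈ range i, q t) = n := by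
  intro m
  induction m with
  | zero =>
    intro n _ hn
    simp only [Finset.prod_range_zero] at hn
    exact ⟨fun _ => 0, fun i hi => by omega, by simpa using (by omega : n = 0).symm⟩
  | succ m ih =>
    intro n hq hn
    have hWpos : 0 < ∏ t ∈ range m, q t :=
      Finset.prod_pos fun t ht => hq t ((Finset.mem_range.mp ht).trans (Nat.lt_succ_self m))
    obtain ⟨a, ha, hsum⟩ := ih (n % ∏ t ∈ range m, q t)
      (fun i hi => hq i (hi.trans (Nat.lt_succ_self m))) (Nat.mod_lt _ hWpos)
    refine ⟨Function.update a m (n / ∏ t ∈ range m, q t), ?_, ?_⟩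
    · intro i hi
      rcases Nat.lt_succ_iff_lt_or_eq.mp hi with hik | hik
      · rw [Function.update_of_ne (by omega)]; exact ha i hik
      · rw [hik, Function.update_self]
        rw [Finset.prod_range_succ] at hn
        exact Nat.div_lt_of_lt_mul hn
    · rw [Finset.sum_range_succ, Function.update_self]
      have : ∀ i ∈ range m, Function.update a m (n / ∏ t ∈ range m, q t) i * ∏ t ∈ range i, q t
          = a i * ∏ t ∈ range i, q t := fun i hi => by
        rw [Function.update_of_ne (by have := Finset.mem_range.mp hi; omega)]
      rw [Finset.sum_congr rfl this, hsum, Nat.mod_add_div']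

open Finset in
lemma mr_exists_top (q : ℕ → ℕ) (k : ℕ) (hk : 1 ≤ k) (hq : ∀ i, i + 1 < k → 0 < q i) (n : ℕ) :
    ∃ a : ℕ → ℕ, (∀ i, i + 1 < k → a i < q i) ∧
      (∑ i ∈ range k, a i * ∏ t ∈ range i, q t) = n := by
  obtain ⟨m, rfl⟩ : ∃ m, k = m + 1 := ⟨k - 1, by omega⟩
  have hWpos : 0 < ∏ t ∈ range m, q t :=
    Finset.prod_pos fun t ht => hq t (by have := Finset.mem_range.mp ht; omega)
  obtain ⟨a, ha, hsum⟩ := mr_exists q m (n % ∏ t ∈ range m, q t)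
    (fun i hi => hq i (by omega)) (Nat.mod_lt _ hWpos)
  refine ⟨Function.update a m (n / ∏ t ∈ range m, q t), ?_, ?_⟩
  · intro i hi
    rw [Function.update_of_ne (by omega)]
    exact ha i (by omega)
  · rw [Finset.sum_range_succ, Function.update_self]
    have : ∀ i ∈ range m, Function.update a m (n / ∏ t ∈ range m, q t) i * ∏ t ∈ range i, q t
        = a i * ∏ t ∈ range i, q t := fun i hi => by
      rw [Function.update_of_ne (by have := Finset.mem_range.mp hi; omega)]
    rw [Finset.sum_congr rfl this, hsum, Nat.mod_add_div']


open Polynomial MvPolynomial Finset in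
lemma aeval_canonical_eq_zero {R : Type*} [CommRing R]
    (k : ℕ) (hk : 1 ≤ k) (p : ℕ → ℕ) (hp0 : p 0 = 1)
    (f : Fin k → Polynomial R) (hmonic : ∀ i, (f i).Monic)
    (hdeg : ∀ i : Fin k, (f i).natDegree = ∏ t ∈ Finset.range (i.1 + 1), p t)
    (F : MvPolynomial (Fin k) R) (hF : MvPolynomial.aeval f F = 0)
    (hFdeg : ∀ i : Fin k, i.1 + 1 ≤ k - 1 → MvPolynomial.degreeOf i F < p (i.1 + 1)) :
    F = 0 := by
  classical
  by_contra hF0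
  set q : ℕ → ℕ := fun t => p (t + 1) with hq
  have hfd : ∀ i : Fin k, (f i).natDegree = ∏ t ∈ range i.1, q t := by
    intro i
    rw [hdeg i, Finset.prod_range_succ', hp0, mul_one]
  set ext : (Fin k →₀ ℕ) → ℕ → ℕ := fun a j => if h : j < k then a ⟨j, h⟩ else 0 with hext
  set valN : (Fin k →₀ ℕ) → ℕ := fun a => ∑ i : Fin k, a i * (f i).natDegree with hvalN
  have hval_eq : ∀ a : Fin k →₀ ℕ, valN a = ∑ j ∈ range k, ext a j * ∏ t ∈ range j, q t := by
    intro a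
    rw [hvalN, ← Fin.sum_univ_eq_sum_range (fun j => ext a j * ∏ t ∈ range j, q t) k]
    refine Finset.sum_congr rfl fun i _ => ?_
    rw [hfd i, hext]
    simp only [i.isLt, dif_pos, Fin.eta]
  have hboundext : ∀ a ∈ F.support, ∀ j, j + 1 < k → ext a j < q j := by
    intro a ha j hj
    have hjk : j < k := by omega
    have h1 : a ⟨j, hjk⟩ ≤ MvPolynomial.degreeOf ⟨j, hjk⟩ F :=
      MvPolynomial.monomial_le_degreeOf _ ha
    have h2 := hFdeg ⟨j, hjk⟩ (by simpa using (by omega : j + 1 ≤ k - 1))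
    simp only [hext, hjk, dif_pos]
    exact lt_of_le_of_lt h1 h2
  have hinj : ∀ a ∈ F.support, ∀ b ∈ F.support, valN a = valN b → a = b := by
    intro a ha b hb hab
    rw [hval_eq a, hval_eq b] at hab
    have := mr_inj q k (ext a) (ext b) (hboundext a ha) (hboundext b hb) hab
    ext i
    have h := this i.1 i.isLt
    simpa only [hext, i.isLt, dif_pos, Fin.eta] using h
  -- the monomial products
  set M : (Fin k →₀ ℕ) → Polynomial R := fun a => ∏ i, f i ^ a i with hM
  have hMmonic : ∀ a, (M a).Monic := fun a =>
    monic_prod_of_monic _ _ fun i _ => (hmonic i).pow _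
  have hMdeg : ∀ a, (M a).natDegree = valN a := by
    intro a
    rw [hM, natDegree_prod_of_monic _ _ fun i _ => (hmonic i).pow _, hvalN]
    exact Finset.sum_congr rfl fun i _ => by rw [(hmonic i).natDegree_pow]
  -- expansion of aeval
  have hexp : MvPolynomial.aeval f F = ∑ a ∈ F.support, Polynomial.C (F.coeff a) * M a := by
    rw [MvPolynomial.aeval_def, MvPolynomial.eval₂_eq']
    refine Finset.sum_congr rfl fun a _ => ?_
    rw [Polynomial.algebraMap_eq]
  -- pick maximal element
  have hsupp : F.support.Nonempty :=
    Finset.nonempty_iff_ne_empty.mpr (fun h => hF0 (MvPolynomial.support_eq_empty.mp h))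
  obtain ⟨a₀, ha₀, hmax⟩ := Finset.exists_max_image F.support valN hsupp
  set N := valN a₀ with hN
  have hcoeff : (∑ a ∈ F.support, Polynomial.C (F.coeff a) * M a).coeff N = F.coeff a₀ := by
    rw [Polynomial.finset_sum_coeff]
    rw [Finset.sum_eq_single a₀]
    · rw [Polynomial.coeff_C_mul, hN, ← hMdeg a₀, Monic.coeff_natDegree (hMmonic a₀), mul_one]
    · intro a ha hne
      have hlt : valN a < N := lt_of_le_of_ne (hmax a ha) (fun h => hne (hinj a ha a₀ ha₀ h))
      have : (Polynomial.C (F.coeff a) * M a).natDegree < N := by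
        refine lt_of_le_of_lt (Polynomial.natDegree_mul_le.trans ?_) hlt
        rw [Polynomial.natDegree_C, hMdeg a, zero_add]
      rw [Polynomial.coeff_eq_zero_of_natDegree_lt this, ]
    · intro h; exact absurd ha₀ h
  rw [← hexp, hF, Polynomial.coeff_zero] at hcoeff
  exact MvPolynomial.mem_support_iff.mp ha₀ hcoeff.symm

open Polynomial MvPolynomial Finset in
lemma exists_canonical_preimage {R : Type*} [CommRing R]
    (k : ℕ) (hk : 1 ≤ k) (p : ℕ → ℕ) (hp0 : p 0 = 1) (hp : ∀ i, 1 ≤ i → i ≤ k - 1 → 0 < p i)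
    (f : Fin k → Polynomial R) (hmonic : ∀ i, (f i).Monic)
    (hdeg : ∀ i : Fin k, (f i).natDegree = ∏ t ∈ Finset.range (i.1 + 1), p t)
    (g : Polynomial R) :
    ∃ F : MvPolynomial (Fin k) R, MvPolynomial.aeval f F = g ∧
      ∀ i : Fin k, i.1 + 1 ≤ k - 1 → MvPolynomial.degreeOf i F < p (i.1 + 1) := by
  classical
  set q : ℕ → ℕ := fun t => p (t + 1) with hqdef
  have hqpos : ∀ j, j + 1 < k → 0 < q j := fun j hj => hp (j + 1) (by omega) (by omega)
  have hfd : ∀ i : Fin k, (f i).natDegree = ∏ t ∈ range i.1, q t := by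
    intro i
    rw [hdeg i, Finset.prod_range_succ', hp0, mul_one]
  suffices H : ∀ n (g : Polynomial R), g.natDegree < n →
      ∃ F : MvPolynomial (Fin k) R, MvPolynomial.aeval f F = g ∧
        ∀ i : Fin k, i.1 + 1 ≤ k - 1 → MvPolynomial.degreeOf i F < p (i.1 + 1) by
    exact H (g.natDegree + 1) g (Nat.lt_succ_self _)
  intro n
  induction n with
  | zero => intro g hg; omega
  | succ n IH =>
    intro g hg
    by_cases hg0 : g = 0
    · refine ⟨0, by simp [hg0], fun i hi => ?_⟩
      rw [MvPolynomial.degreeOf_zero]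
      exact hqpos i.1 (by omega)
    · have hc : g.leadingCoeff ≠ 0 := leadingCoeff_ne_zero.mpr hg0
      set c := g.leadingCoeff with hcdef
      haveI : Nontrivial R := nontrivial_of_ne c 0 hc
      obtain ⟨a, haq, hasum⟩ := mr_exists_top q k hk hqpos g.natDegree
      set aF : Fin k →₀ ℕ := Finsupp.equivFunOnFinite.symm (fun i => a i.1) with haF
      have haFval : ∀ i : Fin k, aF i = a i.1 := fun i => rfl
      set M : Polynomial R := ∏ i, f i ^ aF i with hMdef
      have hMmonic : M.Monic := monic_prod_of_monic _ _ fun i _ => (hmonic i).pow _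
      have hMdeg : M.natDegree = g.natDegree := by
        rw [hMdef, natDegree_prod_of_monic _ _ fun i _ => (hmonic i).pow _]
        have h1 : ∀ i : Fin k, (f i ^ aF i).natDegree = a i.1 * ∏ t ∈ range i.1, q t := by
          intro i; rw [(hmonic i).natDegree_pow, hfd i, haFval i]
        rw [Finset.sum_congr rfl fun i _ => h1 i,
          Fin.sum_univ_eq_sum_range (fun j => a j * ∏ t ∈ range j, q t) k]
        exact hasum
      have hlcne : (Polynomial.C c).leadingCoeff * M.leadingCoeff ≠ 0 := by
        rw [leadingCoeff_C, hMmonic.leadingCoeff, mul_one]; exact hc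
      have hCM : (Polynomial.C c * M).degree = g.degree := by
        rw [degree_mul' hlcne, degree_C hc, zero_add,
          degree_eq_natDegree hMmonic.ne_zero, hMdeg, degree_eq_natDegree hg0]
      have hlc : (Polynomial.C c * M).leadingCoeff = c := by
        rw [leadingCoeff_mul' hlcne, leadingCoeff_C, hMmonic.leadingCoeff, mul_one]
      have hπ : MvPolynomial.aeval f (MvPolynomial.monomial aF c) = Polynomial.C c * M := by
        rw [MvPolynomial.aeval_monomial, Finsupp.prod_pow, Polynomial.algebraMap_eq, hMdef]
      have hmono : ∀ i : Fin k, i.1 + 1 ≤ k - 1 →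
          MvPolynomial.degreeOf i (MvPolynomial.monomial aF c) < p (i.1 + 1) := by
        intro i hi
        rw [MvPolynomial.degreeOf_monomial_eq _ _ hc, haFval i]
        exact haq i.1 (by omega)
      by_cases hg' : g - Polynomial.C c * M = 0
      · exact ⟨MvPolynomial.monomial aF c, by rw [hπ]; exact (sub_eq_zero.mp hg').symm, hmono⟩
      · have hdlt : (g - Polynomial.C c * M).degree < g.degree :=
          degree_sub_lt hCM.symm hg0 hlc.symm
        have hlt : (g - Polynomial.C c * M).natDegree < n :=
          lt_of_lt_of_le (natDegree_lt_natDegree hg' hdlt) (by omega)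
        obtain ⟨F', hF'1, hF'2⟩ := IH _ hlt
        refine ⟨F' + MvPolynomial.monomial aF c, ?_, ?_⟩
        · rw [map_add, hF'1, hπ]; ring_nf
        · intro i hi
          exact lt_of_le_of_lt (MvPolynomial.degreeOf_add_le _ _ _)
            (max_lt (hF'2 i hi) (hmono i hi))



/-- Lemma `F-Phi`, assertions (1), (2) and (5) (canonical pre-images): in the expansion
setup — `R` a commutative ring, `p₀ = 1`, `p₁, …, p_{k-1}` positive integers,
`f₁, …, f_k ∈ R[y]` monic with `deg f_j = p₀p₁⋯p_{j-1}`, and `π : R[y₁,…,y_k] → R[y]`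
the `R`-algebra map sending `y_j ↦ f_j` — every `g ∈ R[y]` has a unique pre-image
`F ∈ R[y₁,…,y_k]` under `π` with `deg_{y_j} F < p_j` for all `1 ≤ j ≤ k-1`.
(Here `f` is indexed by `Fin k`, `f i` standing for `f_{i+1}`.) -/
theorem exists_unique_canonical_preimage {R : Type*} [CommRing R]
    (k : ℕ) (hk : 1 ≤ k)
    (p : ℕ → ℕ) (hp0 : p 0 = 1) (hp : ∀ i, 1 ≤ i → i ≤ k - 1 → 0 < p i)
    (f : Fin k → Polynomial R)
    (hmonic : ∀ i, (f i).Monic)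
    (hdeg : ∀ i : Fin k, (f i).natDegree = ∏ t ∈ Finset.range (i.1 + 1), p t)
    (g : Polynomial R) :
    ∃! F : MvPolynomial (Fin k) R,
      MvPolynomial.aeval f F = g ∧
      ∀ i : Fin k, i.1 + 1 ≤ k - 1 → MvPolynomial.degreeOf i F < p (i.1 + 1) := by
  obtain ⟨F, hF1, hF2⟩ := exists_canonical_preimage k hk p hp0 hp f hmonic hdeg g
  refine ⟨F, ⟨hF1, hF2⟩, ?_⟩
  rintro F' ⟨hF'1, hF'2⟩
  have h0 : F' - F = 0 := by
    refine aeval_canonical_eq_zero k hk p hp0 f hmonic hdeg (F' - F) ?_ ?_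
    · rw [map_sub, hF1, hF'1, sub_self]
    · intro i hi
      exact lt_of_le_of_lt (MvPolynomial.degreeOf_sub_le _ _ _)
        (max_lt (hF'2 i hi) (hF2 i hi))
  exact sub_eq_zero.mp h0
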